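/- arXiv:1410.8240 — 2 statements merged into one kernel-verified Lean document; each statement's English description precedes it below -/
import Mathlib

section
/- For every β > 0, r > 0 and x ∈ ℝ^d with x ≠ 0 one has the identity N^β(r,x) = β^{-(d−1)/2} |x|^{-(d−1)} ∫_{β|x|²/r}^∞ t^{(d−3)/2} e^{−t} dt. Moreover, there exist constants c₁ = c₁(d,β) > 0 and c₂ = c₂(d,β) > 0 such that for all r > 0 and x ≠ 0: c₁ |x|^{-(d−1)} · 1_{{|x| ≤ √r}} ≤ N^β(r,x) ≤ c₂ · H^1(r,x). -/
open MeasureTheory Filter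
open scoped Topology RealInnerProductSpace

noncomputable section

/-- Euclidean space `ℝ^d`. -/
abbrev Euc (d : ℕ) := EuclideanSpace ℝ (Fin d)

/-- The transition density `p^a_n(t,z)` of the Lévy process with generator
`Δ + a^α Δ^{α/2}` in dimension `n`:
`p^a_n(t,z) = (2π)^{-n} ∫ e^{-i z·ξ} e^{-t(|ξ|² + a^α |ξ|^α)} dξ`. -/
def pker (n : ℕ) (α a t : ℝ) (z : Euc n) : ℝ :=
  (2 * Real.pi) ^ (-(n : ℝ)) *
    (∫ ξ : Euc n,
      Complex.exp (-(Complex.I * (⟪z, ξ⟫ : ℂ))) *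
        (Real.exp (-t * (‖ξ‖ ^ 2 + a ^ α * ‖ξ‖ ^ α)) : ℂ)).re

/-- The Gaussian-type kernel `g_{n,β}(t,r) = t^{-n/2} exp(-β r² / t)`, as a function of
the radial variable `r = |z|` (with a real dimension parameter `n`). -/
def gker (n β t r : ℝ) : ℝ := t ^ (-n / 2) * Real.exp (-(β * r ^ 2) / t)

/-- The comparison kernel
`q^a_{n,β}(t,r) = t^{-n/2} exp(-β r²/t) + min (t^{-n/2}) (a^α t / r^{n+α})`, as a function of
the radial variable `r = |z|` (with the convention that at `r = 0` the second summand
equals `t^{-n/2}`, since `a^α t / r^{n+α} = +∞` there). -/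
def qker (α n β a t r : ℝ) : ℝ :=
  gker n β t r +
    (if r = 0 then t ^ (-n / 2) else min (t ^ (-n / 2)) (a ^ α * t / r ^ (n + α)))

/-- The kernel `H^β(r,s) = min (s^{-(d-1)}) (r^β s^{-(d-1+2β)})`, as a function of the
radial variable `s = |z|`. -/
def Hker (d : ℕ) (β r s : ℝ) : ℝ :=
  min (s ^ (-((d : ℝ) - 1))) (r ^ β * s ^ (-((d : ℝ) - 1 + 2 * β)))

/-- `N^β(r,s) = ∫_0^r u^{-(d+1)/2} exp(-β s²/u) du`, as a function of the radial
variable `s = |z|`. -/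
def Nker (d : ℕ) (β r s : ℝ) : ℝ :=
  ∫ u in Set.Ioc (0 : ℝ) r, u ^ (-((d : ℝ) + 1) / 2) * Real.exp (-(β * s ^ 2) / u)

/-- `H_f^β(r,x) = ∫ |f(y)| H^β(r, x - y) dy`. -/
def HInt (d k : ℕ) (f : Euc d → Euc k) (β r : ℝ) (x : Euc d) : ℝ :=
  ∫ y : Euc d, ‖f y‖ * Hker d β r ‖x - y‖

/-- The Kato-type quantity `M_f(r) = sup_x ∫_{|x-y|<r} |f(y)| / |x-y|^{d-1} dy`. -/
def MK (d k : ℕ) (f : Euc d → Euc k) (r : ℝ) : ℝ :=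
  ⨆ x : Euc d, ∫ y in Metric.ball x r, ‖f y‖ / ‖x - y‖ ^ ((d : ℝ) - 1)

/-- `f` belongs to the Kato class `K_{d,1}` iff `M_f(r) → 0` as `r ↓ 0`. -/
def KatoClass (d k : ℕ) (f : Euc d → Euc k) : Prop :=
  Filter.Tendsto (MK d k f) (𝓝[>] (0 : ℝ)) (𝓝 0)

/-- The iterated kernels `p_k^{a,b}`:  `p_0^{a,b}(t,x,y) = p^a(t,x-y)` and
`p_k^{a,b}(t,x,y) = ∫_0^t ∫ p_{k-1}^{a,b}(t-s,x,z) (b(z)·∇p^a(s,z-y)) dz ds`. -/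
def pk (d : ℕ) (α a : ℝ) (b : Euc d → Euc d) : ℕ → ℝ → Euc d → Euc d → ℝ
  | 0 => fun t x y => pker d α a t (x - y)
  | k + 1 => fun t x y =>
      ∫ s in Set.Ioc (0 : ℝ) t, ∫ z : Euc d,
        pk d α a b k (t - s) x z * ⟪b z, gradient (pker d α a s) (z - y)⟫

/-- The majorizing iterated kernels `|p|_k^{a,b}`. -/
def apk (d : ℕ) (α a : ℝ) (b : Euc d → Euc d) : ℕ → ℝ → Euc d → Euc d → ℝ
  | 0 => fun t x y => pker d α a t (x - y)
  | k + 1 => fun t x y =>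
      ∫ s in Set.Ioc (0 : ℝ) t, ∫ z : Euc d,
        apk d α a b k (t - s) x z * (‖b z‖ * ‖gradient (pker d α a s) (z - y)‖)


namespace NkerAux

open Real Set

lemma gamma_integrableOn {p : ℝ} (hp : -1 < p) {w : ℝ} (hw : 0 ≤ w) :
    IntegrableOn (fun t : ℝ => t ^ p * Real.exp (-t)) (Set.Ioi w) := by
  have h := Real.GammaIntegral_convergent (show (0:ℝ) < p + 1 by linarith)
  have h2 : IntegrableOn (fun t : ℝ => t ^ p * Real.exp (-t)) (Set.Ioi 0) := by
    refine h.congr_fun (fun t ht => ?_) measurableSet_Ioi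
    rw [add_sub_cancel_right]; ring
  exact h2.mono_set (Set.Ioi_subset_Ioi hw)

lemma gamma_nonneg_ae {p w : ℝ} (hw : 0 ≤ w) :
    0 ≤ᵐ[MeasureTheory.volume.restrict (Set.Ioi w)]
      (fun t : ℝ => t ^ p * Real.exp (-t)) := by
  refine (MeasureTheory.ae_restrict_iff' measurableSet_Ioi).2 (Filter.Eventually.of_forall ?_)
  intro t ht
  have ht0 : 0 ≤ t := le_trans hw (le_of_lt ht)
  exact mul_nonneg (Real.rpow_nonneg ht0 _) (Real.exp_pos _).le

lemma cov (p : ℝ) {c r : ℝ} (hc : 0 < c) (hr : 0 < r) :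
    (∫ t in Set.Ioi (c / r), t ^ p * Real.exp (-t))
      = ∫ u in Set.Ioc (0:ℝ) r, (c / u ^ 2) * ((c / u) ^ p * Real.exp (-(c / u))) := by
  have himg : (fun u : ℝ => c / u) '' Set.Ioc 0 r = Set.Ici (c / r) := by
    ext t
    constructor
    · rintro ⟨u, ⟨hu0, hur⟩, rfl⟩
      simp only [Set.mem_Ici]
      rw [div_le_div_iff₀ hr hu0]
      nlinarith
    · intro ht
      have hcr : 0 < c / r := div_pos hc hr
      have ht0 : 0 < t := lt_of_lt_of_le hcr ht
      refine ⟨c / t, ⟨div_pos hc ht0, ?_⟩, ?_⟩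
      · rw [div_le_iff₀ ht0]
        rw [Set.mem_Ici, div_le_iff₀ hr] at ht
        nlinarith
      · field_simp
  have hderiv : ∀ u ∈ Set.Ioc (0:ℝ) r,
      HasDerivWithinAt (fun u : ℝ => c / u) (-(c / u ^ 2)) (Set.Ioc (0:ℝ) r) u := by
    intro u hu
    have hu0 : u ≠ 0 := ne_of_gt hu.1
    have := ((hasDerivAt_inv hu0).const_mul c).hasDerivWithinAt
      (s := Set.Ioc (0:ℝ) r)
    simpa [div_eq_mul_inv, neg_div, mul_neg] using this
  have hinj : Set.InjOn (fun u : ℝ => c / u) (Set.Ioc (0:ℝ) r) := by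
    intro a ha b hb h
    have ha0 : a ≠ 0 := ne_of_gt ha.1
    have hb0 : b ≠ 0 := ne_of_gt hb.1
    have h' : c / a = c / b := h
    rw [div_eq_div_iff ha0 hb0] at h'
    exact mul_left_cancel₀ (ne_of_gt hc) (by linarith)
  rw [← MeasureTheory.integral_Ici_eq_integral_Ioi, ← himg,
    MeasureTheory.integral_image_eq_integral_abs_deriv_smul measurableSet_Ioc hderiv hinj]
  refine MeasureTheory.setIntegral_congr_fun measurableSet_Ioc (fun u hu => ?_)
  have hu0 : (0:ℝ) < u := hu.1
  rw [abs_neg, abs_of_pos (div_pos hc (pow_pos hu0 2))]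
  simp [smul_eq_mul]

lemma rpow_calc {c u : ℝ} (hc : 0 < c) (hu : 0 < u) (a : ℝ) :
    c ^ (-(a+1)) * (c / u ^ 2 * (c / u) ^ a) = u ^ (-(a+2)) := by
  have h1 : (c / u) ^ a = c ^ a * u ^ (-a) := by
    rw [Real.div_rpow hc.le hu.le, Real.rpow_neg hu.le, div_eq_mul_inv]
  have h2 : c / u ^ 2 = c * u ^ (-2:ℝ) := by
    rw [Real.rpow_neg hu.le, div_eq_mul_inv, ← Real.rpow_natCast u 2]
    norm_num
  rw [h1, h2]
  have : c ^ (-(a+1)) * (c * u ^ (-2:ℝ) * (c ^ a * u ^ (-a)))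
      = (c ^ (-(a+1)) * c ^ (1:ℝ) * c ^ a) * (u ^ (-2:ℝ) * u ^ (-a)) := by
    rw [Real.rpow_one]; ring
  rw [this, ← Real.rpow_add hc, ← Real.rpow_add hc, ← Real.rpow_add hu,
    show -(a+1) + 1 + a = 0 by ring, show (-2:ℝ) + -a = -(a+2) by ring,
    Real.rpow_zero, one_mul]

lemma mul_sq_rpow {β s : ℝ} (hβ : 0 < β) (hs : 0 < s) (q : ℝ) :
    (β * s ^ 2) ^ q = β ^ q * s ^ (2 * q) := by
  rw [Real.mul_rpow hβ.le (sq_nonneg s), ← Real.rpow_natCast s 2,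
    ← Real.rpow_mul hs.le]
  norm_num

lemma rpow_le_factorial_mul_exp {q : ℝ} (hq : 0 ≤ q) {n : ℕ} (hn : q ≤ n)
    {x : ℝ} (hx : 0 < x) : x ^ q ≤ ((n.factorial : ℝ) + 1) * Real.exp x := by
  have hfac : (0:ℝ) < (n.factorial : ℝ) := by exact_mod_cast Nat.factorial_pos n
  have hexp : (0:ℝ) < Real.exp x := Real.exp_pos x
  have hxn : x ^ n ≤ (n.factorial : ℝ) * Real.exp x := by
    have h := Real.sum_le_exp_of_nonneg hx.le (n+1)
    have hterm : x ^ n / (n.factorial : ℝ) ≤ Real.exp x := by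
      refine le_trans ?_ h
      exact Finset.single_le_sum (f := fun i => x ^ i / (i.factorial : ℝ))
        (fun i _ => by positivity) (Finset.self_mem_range_succ n)
    rw [div_le_iff₀ hfac] at hterm
    linarith [hterm]
  rcases le_total x 1 with h1 | h1
  · have hle1 : x ^ q ≤ 1 := Real.rpow_le_one hx.le h1 hq
    have h1e : (1:ℝ) ≤ Real.exp x := Real.one_le_exp hx.le
    nlinarith
  · have : x ^ q ≤ x ^ (n:ℝ) := Real.rpow_le_rpow_of_exponent_le h1 hn
    rw [Real.rpow_natCast] at this
    nlinarith

lemma Nker_formula (d : ℕ) (hd : 2 ≤ d) {β r s : ℝ} (hβ : 0 < β) (hr : 0 < r)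
    (hs : 0 < s) :
    Nker d β r s = β ^ (-((d:ℝ)-1)/2) * s ^ (-((d:ℝ)-1)) *
      ∫ t in Set.Ioi (β * s ^ 2 / r), t ^ (((d:ℝ)-3)/2) * Real.exp (-t) := by
  have hc : 0 < β * s ^ 2 := by positivity
  set c := β * s ^ 2 with hcdef
  set p : ℝ := ((d:ℝ)-3)/2 with hpdef
  have hK : β ^ (-((d:ℝ)-1)/2) * s ^ (-((d:ℝ)-1)) = c ^ (-(p+1)) := by
    rw [mul_sq_rpow hβ hs]
    congr 1
    · congr 1; rw [hpdef]; ring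
    · congr 1; rw [hpdef]; ring
  rw [cov p hc hr, hK, ← MeasureTheory.integral_const_mul]
  unfold Nker
  refine MeasureTheory.setIntegral_congr_fun measurableSet_Ioc (fun u hu => ?_)
  have hu0 : (0:ℝ) < u := hu.1
  have key := rpow_calc hc hu0 p
  have hexp : -(c / u) = -c / u := by ring
  calc u ^ (-((d:ℝ)+1)/2) * Real.exp (-c / u)
      = u ^ (-(p+2)) * Real.exp (-(c/u)) := by
        rw [hexp, show -((d:ℝ)+1)/2 = -(p+2) by rw [hpdef]; ring]
    _ = (c ^ (-(p+1)) * (c / u ^ 2 * (c / u) ^ p)) * Real.exp (-(c/u)) := by rw [key]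
    _ = c ^ (-(p+1)) * (c / u ^ 2 * ((c / u) ^ p * Real.exp (-(c/u)))) := by ring

end NkerAux

/-- Explicit formula and two-sided control for `N^β`. -/
theorem Nker_identity_and_bounds (d : ℕ) (hd : 2 ≤ d) (β : ℝ) (hβ : 0 < β) :
    (∀ r : ℝ, 0 < r → ∀ x : Euc d, x ≠ 0 →
        Nker d β r ‖x‖ =
          β ^ (-((d : ℝ) - 1) / 2) * ‖x‖ ^ (-((d : ℝ) - 1)) *
            ∫ t in Set.Ioi (β * ‖x‖ ^ 2 / r), t ^ (((d : ℝ) - 3) / 2) * Real.exp (-t)) ∧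
      ∃ c₁ c₂ : ℝ, 0 < c₁ ∧ 0 < c₂ ∧
        ∀ r : ℝ, 0 < r → ∀ x : Euc d, x ≠ 0 →
          (if ‖x‖ ≤ Real.sqrt r then c₁ * ‖x‖ ^ (-((d : ℝ) - 1)) else 0) ≤ Nker d β r ‖x‖ ∧
            Nker d β r ‖x‖ ≤ c₂ * Hker d 1 r ‖x‖ := by
  have hD : (2:ℝ) ≤ (d:ℝ) := by exact_mod_cast hd
  set p : ℝ := ((d:ℝ)-3)/2 with hpdef
  have hp : (-1:ℝ) < p := by rw [hpdef]; linarith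
  have hId : ∀ r : ℝ, 0 < r → ∀ x : Euc d, x ≠ 0 →
      Nker d β r ‖x‖ =
        β ^ (-((d : ℝ) - 1) / 2) * ‖x‖ ^ (-((d : ℝ) - 1)) *
          ∫ t in Set.Ioi (β * ‖x‖ ^ 2 / r), t ^ (((d : ℝ) - 3) / 2) * Real.exp (-t) := by
    intro r hr x hx
    exact NkerAux.Nker_formula d hd hβ hr (norm_pos_iff.mpr hx)
  refine ⟨hId, ?_⟩
  set Cg : ℝ := ∫ t in Set.Ioi (0:ℝ), t ^ p * Real.exp (-t) with hCgdef
  set Iβ : ℝ := ∫ t in Set.Ioi β, t ^ p * Real.exp (-t) with hIβdef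
  have hIβpos : 0 < Iβ := by
    rw [hIβdef, MeasureTheory.setIntegral_pos_iff_support_of_nonneg_ae
      (NkerAux.gamma_nonneg_ae hβ.le) (NkerAux.gamma_integrableOn hp hβ.le)]
    have hsub : Set.Ioi β ⊆ Function.support (fun t : ℝ => t ^ p * Real.exp (-t)) ∩ Set.Ioi β := by
      intro t ht
      have ht0 : 0 < t := lt_trans hβ ht
      exact ⟨(mul_pos (Real.rpow_pos_of_pos ht0 _) (Real.exp_pos _)).ne', ht⟩
    refine lt_of_lt_of_le ?_ (measure_mono hsub)
    simp [Real.volume_Ioi]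
  have hIleCg : Iβ ≤ Cg :=
    MeasureTheory.setIntegral_mono_set (NkerAux.gamma_integrableOn hp le_rfl)
      (NkerAux.gamma_nonneg_ae le_rfl) ((Set.Ioi_subset_Ioi hβ.le).eventuallyLE)
  have hCgpos : 0 < Cg := lt_of_lt_of_le hIβpos hIleCg
  set A : ℝ := β ^ (-((d:ℝ)-1)/2) with hAdef
  have hApos : 0 < A := Real.rpow_pos_of_pos hβ _
  set M : ℝ := (d.factorial : ℝ) + 1 with hMdef
  have hMpos : 0 < M := by
    have : (0:ℝ) < (d.factorial : ℝ) := by exact_mod_cast Nat.factorial_pos d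
    linarith
  set B : ℝ := M * β ^ (-((d:ℝ)+1)/2) with hBdef
  have hBpos : 0 < B := mul_pos hMpos (Real.rpow_pos_of_pos hβ _)
  refine ⟨A * Iβ, max (A * Cg) B, mul_pos hApos hIβpos,
    lt_max_iff.mpr (Or.inl (mul_pos hApos hCgpos)), ?_⟩
  intro r hr x hx
  have hs : 0 < ‖x‖ := norm_pos_iff.mpr hx
  set s : ℝ := ‖x‖ with hsdef
  have hc : 0 < β * s ^ 2 := by positivity
  have hw : 0 < β * s ^ 2 / r := div_pos hc hr
  have hform := hId r hr x hx
  set Iw : ℝ := ∫ t in Set.Ioi (β * s ^ 2 / r), t ^ p * Real.exp (-t) with hIwdef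
  have hse : 0 < s ^ (-((d:ℝ)-1)) := Real.rpow_pos_of_pos hs _
  constructor
  · split_ifs with hsr
    · have hs2r : s ^ 2 ≤ r := by
        nlinarith [mul_self_le_mul_self hs.le hsr, Real.mul_self_sqrt hr.le]
      have hwβ : β * s ^ 2 / r ≤ β := by
        rw [div_le_iff₀ hr]; nlinarith
      have hmono : Iβ ≤ Iw :=
        MeasureTheory.setIntegral_mono_set (NkerAux.gamma_integrableOn hp hw.le)
          (NkerAux.gamma_nonneg_ae hw.le) ((Set.Ioi_subset_Ioi hwβ).eventuallyLE)
      rw [hform]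
      calc A * Iβ * s ^ (-((d:ℝ)-1)) = (A * s ^ (-((d:ℝ)-1))) * Iβ := by ring
        _ ≤ (A * s ^ (-((d:ℝ)-1))) * Iw :=
            mul_le_mul_of_nonneg_left hmono (by positivity)
        _ = A * s ^ (-((d:ℝ)-1)) * Iw := by ring
    · unfold Nker
      refine MeasureTheory.setIntegral_nonneg measurableSet_Ioc (fun u hu => ?_)
      exact mul_nonneg (Real.rpow_nonneg hu.1.le _) (Real.exp_pos _).le
  · have hHker : Hker d 1 r s = min (s ^ (-((d:ℝ)-1))) (r * s ^ (-((d:ℝ)+1))) := by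
      unfold Hker
      rw [Real.rpow_one, show -((d:ℝ)-1+2*1) = -((d:ℝ)+1) by ring]
    rw [hHker]
    have hb1 : Nker d β r s ≤ (A * Cg) * s ^ (-((d:ℝ)-1)) := by
      rw [hform]
      have hmono : Iw ≤ Cg :=
        MeasureTheory.setIntegral_mono_set (NkerAux.gamma_integrableOn hp le_rfl)
          (NkerAux.gamma_nonneg_ae le_rfl) ((Set.Ioi_subset_Ioi hw.le).eventuallyLE)
      calc A * s ^ (-((d:ℝ)-1)) * Iw ≤ A * s ^ (-((d:ℝ)-1)) * Cg :=
            mul_le_mul_of_nonneg_left hmono (by positivity)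
        _ = (A * Cg) * s ^ (-((d:ℝ)-1)) := by ring
    have hb2 : Nker d β r s ≤ B * (r * s ^ (-((d:ℝ)+1))) := by
      set q : ℝ := ((d:ℝ)+1)/2 with hqdef
      have hq0 : 0 ≤ q := by rw [hqdef]; linarith
      have hqd : q ≤ (d:ℝ) := by rw [hqdef]; linarith
      have hbound : ∀ u ∈ Set.Ioc (0:ℝ) r,
          ‖u ^ (-((d:ℝ)+1)/2) * Real.exp (-(β * s ^ 2) / u)‖
            ≤ M * (β * s ^ 2) ^ (-q) := by
        intro u hu
        have hu0 : (0:ℝ) < u := hu.1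
        have hx0 : 0 < (β * s ^ 2) / u := div_pos hc hu0
        have hkey := NkerAux.rpow_le_factorial_mul_exp hq0 hqd hx0
        rw [Real.norm_eq_abs, abs_of_nonneg
          (mul_nonneg (Real.rpow_nonneg hu0.le _) (Real.exp_pos _).le),
          show -((d:ℝ)+1)/2 = -q by rw [hqdef]; ring, neg_div]
        have hcq : (0:ℝ) < (β * s ^ 2) ^ q := Real.rpow_pos_of_pos hc q
        have hcu : ((β * s ^ 2) / u) ^ q = (β * s ^ 2) ^ q * u ^ (-q) := by
          rw [Real.div_rpow hc.le hu0.le, Real.rpow_neg hu0.le, div_eq_mul_inv]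
        have hmul := mul_le_mul_of_nonneg_right hkey
          (mul_nonneg (inv_nonneg.mpr hcq.le) (Real.exp_pos (-((β * s ^ 2) / u))).le)
        have eqL : ((β * s ^ 2) / u) ^ q * (((β * s ^ 2) ^ q)⁻¹ * Real.exp (-((β * s ^ 2) / u)))
            = u ^ (-q) * Real.exp (-((β * s ^ 2) / u)) := by
          rw [hcu]; field_simp
        have eqR : M * Real.exp ((β * s ^ 2) / u) *
              (((β * s ^ 2) ^ q)⁻¹ * Real.exp (-((β * s ^ 2) / u)))
            = M * ((β * s ^ 2) ^ q)⁻¹ := by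
          rw [Real.exp_neg]; field_simp
        rw [eqL, eqR] at hmul
        rw [Real.rpow_neg hc.le]
        exact hmul
      have hvol : MeasureTheory.volume (Set.Ioc (0:ℝ) r) < ⊤ := by
        rw [Real.volume_Ioc]; exact ENNReal.ofReal_lt_top
      have hnorm := MeasureTheory.norm_setIntegral_le_of_norm_le_const
        (μ := MeasureTheory.volume) hvol hbound
      have hvolr : MeasureTheory.volume.real (Set.Ioc (0:ℝ) r) = r := by
        simp [hr.le]
      rw [hvolr, Real.norm_eq_abs] at hnorm
      have hcp : (β * s ^ 2) ^ (-q) = β ^ (-q) * s ^ (-((d:ℝ)+1)) := by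
        rw [NkerAux.mul_sq_rpow hβ hs]
        congr 1
        rw [hqdef]; ring
      have hNle : Nker d β r s ≤ M * (β * s ^ 2) ^ (-q) * r := by
        refine le_trans (le_abs_self _) ?_
        exact hnorm
      calc Nker d β r s ≤ M * (β * s ^ 2) ^ (-q) * r := hNle
        _ = B * (r * s ^ (-((d:ℝ)+1))) := by
            rw [hcp, hBdef, show -q = -((d:ℝ)+1)/2 by rw [hqdef]; ring]
            ring
    rcases le_total (s ^ (-((d:ℝ)-1))) (r * s ^ (-((d:ℝ)+1))) with hab | hab
    · rw [min_eq_left hab]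
      exact hb1.trans (mul_le_mul_of_nonneg_right (le_max_left _ _) hse.le)
    · rw [min_eq_right hab]
      refine hb2.trans (mul_le_mul_of_nonneg_right (le_max_right _ _) ?_)
      positivity
end
end

section
/- For any 0 < β₁ < β₂ < ∞ there exists a constant C_g = C_g(d, β₁/β₂) > 0 such that, with C_β := min(β₂ − β₁, β₁/2), for all t > 0 and x, y, z ∈ ℝ^d: ∫_0^t g_{d,β₁}(t−s, x−z) · s^{-1/2} · g_{d,β₂}(s, z−y) ds ≤ C_g · (N^{C_β}(t, x−z) + N^{C_β}(t, z−y)) · g_{d,β₁}(t, x−y). -/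
open MeasureTheory Filter
open scoped Topology RealInnerProductSpace

noncomputable section

section ThreePAux

open Set Real MeasureTheory

private lemma wcauchy {a b p q : ℝ} (hp : 0 < p) (hq : 0 < q) :
    (a + b) ^ 2 / (p + q) ≤ a ^ 2 / p + b ^ 2 / q := by
  rw [div_add_div _ _ hp.ne' hq.ne', div_le_div_iff₀ (by positivity) (by positivity)]
  nlinarith [sq_nonneg (a * q - b * p), mul_pos hp hq]

private lemma gker_nonneg {n β t r : ℝ} (ht : 0 ≤ t) : 0 ≤ gker n β t r :=
  mul_nonneg (Real.rpow_nonneg ht _) (Real.exp_pos _).le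

private lemma F_integrableOn (d : ℕ) (hd : 1 ≤ d) {β w r : ℝ} (hβ : 0 < β) (hw : w ≠ 0)
    (hr : 0 < r) :
    IntegrableOn (fun u : ℝ => u ^ (-((d : ℝ) + 1) / 2) * Real.exp (-(β * w ^ 2) / u))
      (Ioc 0 r) := by
  have hc : 0 < β * w ^ 2 := by positivity
  set c := β * w ^ 2 with hcdef
  apply Measure.integrableOn_of_bounded
    (M := (d.factorial : ℝ) / c ^ d * r ^ (((d : ℝ) - 1) / 2)) measure_Ioc_lt_top.ne
  · exact ((measurable_id.pow_const _).mul
      ((measurable_const.div measurable_id).exp)).aestronglyMeasurable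
  · rw [ae_restrict_iff' measurableSet_Ioc]
    filter_upwards with u hu
    obtain ⟨hu0, hur⟩ := hu
    have h2 : Real.exp (-c / u) ≤ (d.factorial : ℝ) * u ^ d / c ^ d := by
      rw [neg_div, Real.exp_neg]
      have hgt : (0 : ℝ) < c ^ d / ((d.factorial : ℝ) * u ^ d) := by positivity
      have hle : c ^ d / ((d.factorial : ℝ) * u ^ d) ≤ Real.exp (c / u) := by
        calc c ^ d / ((d.factorial : ℝ) * u ^ d) = (c / u) ^ d / (d.factorial : ℝ) := by
              rw [div_pow]; ring
          _ ≤ Real.exp (c / u) := Real.pow_div_factorial_le_exp (c / u) (by positivity) d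
      calc (Real.exp (c / u))⁻¹ ≤ (c ^ d / ((d.factorial : ℝ) * u ^ d))⁻¹ := by
            exact inv_anti₀ hgt hle
        _ = (d.factorial : ℝ) * u ^ d / c ^ d := by rw [inv_div]
    have hnn : 0 ≤ u ^ (-((d : ℝ) + 1) / 2) * Real.exp (-c / u) := by positivity
    rw [Real.norm_eq_abs, abs_of_nonneg (by rw [hcdef] at hnn ⊢; exact hnn)]
    have hcomb : u ^ (-((d : ℝ) + 1) / 2) * u ^ (d : ℝ) = u ^ (((d : ℝ) - 1) / 2) := by
      rw [← Real.rpow_add hu0]; congr 1; ring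
    calc u ^ (-((d : ℝ) + 1) / 2) * Real.exp (-(β * w ^ 2) / u)
        ≤ u ^ (-((d : ℝ) + 1) / 2) * ((d.factorial : ℝ) * u ^ d / c ^ d) := by
          gcongr
      _ = (d.factorial : ℝ) / c ^ d * (u ^ (-((d : ℝ) + 1) / 2) * u ^ (d : ℝ)) := by
          rw [← Real.rpow_natCast u d]; ring
      _ = (d.factorial : ℝ) / c ^ d * u ^ (((d : ℝ) - 1) / 2) := by rw [hcomb]
      _ ≤ (d.factorial : ℝ) / c ^ d * r ^ (((d : ℝ) - 1) / 2) := by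
          have hd1 : (0 : ℝ) ≤ ((d : ℝ) - 1) / 2 := by
            have : (1 : ℝ) ≤ (d : ℝ) := by exact_mod_cast hd
            linarith
          gcongr

private lemma integral_reflect (F : ℝ → ℝ) {t : ℝ} (ht : 0 ≤ t) :
    ∫ s in Ioc (0 : ℝ) t, F (t - s) = ∫ s in Ioc (0 : ℝ) t, F s := by
  rw [← intervalIntegral.integral_of_le ht, ← intervalIntegral.integral_of_le ht,
    intervalIntegral.integral_comp_sub_left F t, sub_zero, sub_self]

private lemma integrableOn_reflect {F : ℝ → ℝ} {t : ℝ} (ht : 0 ≤ t)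
    (h : IntegrableOn F (Ioc 0 t)) : IntegrableOn (fun s => F (t - s)) (Ioc 0 t) := by
  rw [← intervalIntegrable_iff_integrableOn_Ioc_of_le ht] at h ⊢
  simpa using (h.comp_sub_left t).symm

private lemma not_integrableOn_of_rpow_le {f : ℝ → ℝ} {m e r : ℝ} (hm : 0 < m) (he : e ≤ -1)
    (hr : 0 < r) (hb : ∀ s ∈ Ioo (0 : ℝ) r, m * s ^ e ≤ f s) :
    ¬ IntegrableOn f (Ioo 0 r) := by
  intro h
  have hmono : IntegrableOn (fun s : ℝ => m * s ^ e) (Ioo 0 r) := by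
    apply Integrable.mono' h
      (measurable_const.mul (measurable_id'.pow_const _)).aestronglyMeasurable
    rw [ae_restrict_iff' measurableSet_Ioo]
    filter_upwards with s hs
    show ‖m * s ^ e‖ ≤ f s
    rw [Real.norm_eq_abs,
      abs_of_nonneg (mul_nonneg hm.le (Real.rpow_nonneg hs.1.le e))]
    exact hb s hs
  have h2 : IntegrableOn (fun s : ℝ => s ^ e) (Ioo 0 r) := by
    exact IntegrableOn.congr_fun (hmono.const_mul m⁻¹)
      (fun s _ => by simp only [inv_mul_cancel_left₀ hm.ne']) measurableSet_Ioo
  rw [intervalIntegral.integrableOn_Ioo_rpow_iff hr] at h2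
  linarith

set_option maxHeartbeats 1000000 in
private lemma pointwise_bound (d : ℕ) (hd : 1 ≤ d) {β₁ β₂ θ Cβ t s a b c : ℝ}
    (h₁ : 0 < β₁) (h₁₂ : β₁ < β₂) (hθdef : θ = (1 + β₁ / β₂) / 2)
    (hCβ1 : Cβ ≤ β₁ / 2) (hCβ2 : Cβ ≤ β₂ - β₁) (hCβ0 : 0 < Cβ)
    (ht : 0 < t) (hs0 : 0 < s) (hst : s ≤ t)
    (ha : 0 ≤ a) (hb : 0 ≤ b) (hc0 : 0 ≤ c) (hc : c ≤ a + b) :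
    gker d β₁ (t - s) a * s ^ (-(1 : ℝ) / 2) * gker d β₂ s b
      ≤ ((1 - θ) ^ (-(d : ℝ) / 2) + θ ^ (-((d : ℝ) + 1) / 2)) * gker d β₁ t c *
        (s ^ (-((d : ℝ) + 1) / 2) * Real.exp (-(Cβ * b ^ 2) / s) +
          (t - s) ^ (-((d : ℝ) + 1) / 2) * Real.exp (-(Cβ * a ^ 2) / (t - s))) := by
  have hβ₂ : 0 < β₂ := h₁.trans h₁₂
  have hrlt : β₁ / β₂ < 1 := (div_lt_one hβ₂).mpr h₁₂
  have hr0 : 0 < β₁ / β₂ := by positivity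
  have hθ0 : 0 < θ := by rw [hθdef]; linarith
  have hθ1 : θ < 1 := by rw [hθdef]; linarith
  have h1θ : 0 < 1 - θ := by linarith
  have hdR : (1 : ℝ) ≤ (d : ℝ) := by exact_mod_cast hd
  set C₁ : ℝ := (1 - θ) ^ (-(d : ℝ) / 2) with hC₁
  set C₂ : ℝ := θ ^ (-((d : ℝ) + 1) / 2) with hC₂
  have hC₁0 : 0 < C₁ := Real.rpow_pos_of_pos h1θ _
  have hC₂0 : 0 < C₂ := Real.rpow_pos_of_pos hθ0 _
  have hgk : 0 ≤ gker d β₁ t c := gker_nonneg ht.le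
  have hFb0 : 0 ≤ s ^ (-((d : ℝ) + 1) / 2) * Real.exp (-(Cβ * b ^ 2) / s) := by positivity
  have hFa0 : 0 ≤ (t - s) ^ (-((d : ℝ) + 1) / 2) * Real.exp (-(Cβ * a ^ 2) / (t - s)) := by
    have h : (0 : ℝ) ≤ t - s := by linarith
    positivity
  rcases eq_or_lt_of_le hst with rfl | hst'
  · have hz : gker (d : ℝ) β₁ (s - s) a = 0 := by
      simp only [gker, sub_self]
      have hd0 : -(d : ℝ) / 2 < 0 := by linarith
      rw [Real.zero_rpow hd0.ne, zero_mul]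
    rw [hz, zero_mul, zero_mul]
    exact mul_nonneg (mul_nonneg (by positivity) hgk) (add_nonneg hFb0 hFa0)
  · have hts : 0 < t - s := by linarith
    have e1 : gker d β₁ (t - s) a * s ^ (-(1 : ℝ) / 2) * gker d β₂ s b
        = (t - s) ^ (-(d : ℝ) / 2) * s ^ (-((d : ℝ) + 1) / 2) *
          Real.exp (-(β₁ * a ^ 2) / (t - s) + -(β₂ * b ^ 2) / s) := by
      have hsp : s ^ (-((d : ℝ) + 1) / 2) = s ^ (-(1 : ℝ) / 2) * s ^ (-(d : ℝ) / 2) := by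
        rw [← Real.rpow_add hs0]; congr 1; ring
      simp only [gker, Real.exp_add, hsp]
      ring
    have hc2 : c ^ 2 ≤ (a + b) ^ 2 := by nlinarith
    rcases le_or_gt s (θ * t) with hsθ | hsθ
    · -- small time region
      have key : gker d β₁ (t - s) a * s ^ (-(1 : ℝ) / 2) * gker d β₂ s b
          ≤ C₁ * gker d β₁ t c *
            (s ^ (-((d : ℝ) + 1) / 2) * Real.exp (-(Cβ * b ^ 2) / s)) := by
        have e2 : C₁ * gker d β₁ t c *
              (s ^ (-((d : ℝ) + 1) / 2) * Real.exp (-(Cβ * b ^ 2) / s))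
            = C₁ * t ^ (-(d : ℝ) / 2) * s ^ (-((d : ℝ) + 1) / 2) *
              Real.exp (-(β₁ * c ^ 2) / t + -(Cβ * b ^ 2) / s) := by
          simp only [gker, Real.exp_add]; ring
        rw [e1, e2]
        have hP : (t - s) ^ (-(d : ℝ) / 2) ≤ C₁ * t ^ (-(d : ℝ) / 2) := by
          have h4 : (1 - θ) * t ≤ t - s := by nlinarith
          have hne : -(d : ℝ) / 2 ≤ 0 := by linarith
          calc (t - s) ^ (-(d : ℝ) / 2) ≤ ((1 - θ) * t) ^ (-(d : ℝ) / 2) :=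
                Real.rpow_le_rpow_of_nonpos (by positivity) h4 hne
            _ = C₁ * t ^ (-(d : ℝ) / 2) := Real.mul_rpow h1θ.le ht.le
        have hE : Real.exp (-(β₁ * a ^ 2) / (t - s) + -(β₂ * b ^ 2) / s)
            ≤ Real.exp (-(β₁ * c ^ 2) / t + -(Cβ * b ^ 2) / s) := by
          rw [Real.exp_le_exp]
          have hw := wcauchy (a := a) (b := b) hts hs0
          rw [sub_add_cancel] at hw
          have f1 : β₁ * c ^ 2 / t ≤ β₁ * ((a + b) ^ 2 / t) := by
            rw [mul_div_assoc]
            gcongr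
          have f2 : β₁ * ((a + b) ^ 2 / t) ≤ β₁ * (a ^ 2 / (t - s) + b ^ 2 / s) :=
            mul_le_mul_of_nonneg_left hw h₁.le
          have f3 : Cβ * b ^ 2 / s ≤ (β₂ - β₁) * b ^ 2 / s := by gcongr
          have g1 : β₁ * (a ^ 2 / (t - s) + b ^ 2 / s)
              = β₁ * a ^ 2 / (t - s) + β₁ * b ^ 2 / s := by ring
          have g2 : (β₂ - β₁) * b ^ 2 / s = β₂ * b ^ 2 / s - β₁ * b ^ 2 / s := by ring
          rw [g1] at f2
          rw [g2] at f3
          rw [neg_div, neg_div, neg_div, neg_div]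
          linarith [f1, f2, f3]
        apply mul_le_mul ?_ hE (Real.exp_pos _).le (by positivity)
        exact mul_le_mul_of_nonneg_right hP (Real.rpow_nonneg hs0.le _)
      calc gker d β₁ (t - s) a * s ^ (-(1 : ℝ) / 2) * gker d β₂ s b
          ≤ C₁ * gker d β₁ t c *
            (s ^ (-((d : ℝ) + 1) / 2) * Real.exp (-(Cβ * b ^ 2) / s)) := key
        _ ≤ (C₁ + C₂) * gker d β₁ t c *
            (s ^ (-((d : ℝ) + 1) / 2) * Real.exp (-(Cβ * b ^ 2) / s) +
              (t - s) ^ (-((d : ℝ) + 1) / 2) * Real.exp (-(Cβ * a ^ 2) / (t - s))) := by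
            apply mul_le_mul ?_ (le_add_of_nonneg_right hFa0) hFb0 (by positivity)
            exact mul_le_mul_of_nonneg_right (by linarith) hgk
    · -- large time region
      have key : gker d β₁ (t - s) a * s ^ (-(1 : ℝ) / 2) * gker d β₂ s b
          ≤ C₂ * gker d β₁ t c *
            ((t - s) ^ (-((d : ℝ) + 1) / 2) * Real.exp (-(Cβ * a ^ 2) / (t - s))) := by
        have e2 : C₂ * gker d β₁ t c *
              ((t - s) ^ (-((d : ℝ) + 1) / 2) * Real.exp (-(Cβ * a ^ 2) / (t - s)))
            = C₂ * t ^ (-(d : ℝ) / 2) * (t - s) ^ (-((d : ℝ) + 1) / 2) *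
              Real.exp (-(β₁ * c ^ 2) / t + -(Cβ * a ^ 2) / (t - s)) := by
          simp only [gker, Real.exp_add]; ring
        rw [e1, e2]
        have hP : (t - s) ^ (-(d : ℝ) / 2) * s ^ (-((d : ℝ) + 1) / 2)
            ≤ C₂ * t ^ (-(d : ℝ) / 2) * (t - s) ^ (-((d : ℝ) + 1) / 2) := by
          have hex : -((d : ℝ) + 1) / 2 ≤ 0 := by linarith
          have hsp : s ^ (-((d : ℝ) + 1) / 2) ≤ C₂ * t ^ (-((d : ℝ) + 1) / 2) := by
            calc s ^ (-((d : ℝ) + 1) / 2) ≤ (θ * t) ^ (-((d : ℝ) + 1) / 2) :=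
                  Real.rpow_le_rpow_of_nonpos (by positivity) hsθ.le hex
              _ = C₂ * t ^ (-((d : ℝ) + 1) / 2) := Real.mul_rpow hθ0.le ht.le
          have hts' : (t - s) ^ (-(d : ℝ) / 2)
              = (t - s) ^ (-((d : ℝ) + 1) / 2) * (t - s) ^ ((1 : ℝ) / 2) := by
            rw [← Real.rpow_add hts]; congr 1; ring
          have h12 : (t - s) ^ ((1 : ℝ) / 2) ≤ t ^ ((1 : ℝ) / 2) :=
            Real.rpow_le_rpow hts.le (by linarith) (by norm_num)
          have htt : t ^ ((1 : ℝ) / 2) * t ^ (-((d : ℝ) + 1) / 2) = t ^ (-(d : ℝ) / 2) := by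
            rw [← Real.rpow_add ht]; congr 1; ring
          calc (t - s) ^ (-(d : ℝ) / 2) * s ^ (-((d : ℝ) + 1) / 2)
              ≤ (t - s) ^ (-((d : ℝ) + 1) / 2) * t ^ ((1 : ℝ) / 2) *
                (C₂ * t ^ (-((d : ℝ) + 1) / 2)) := by
                rw [hts']
                apply mul_le_mul ?_ hsp (Real.rpow_nonneg hs0.le _) (by positivity)
                exact mul_le_mul_of_nonneg_left h12 (Real.rpow_nonneg hts.le _)
            _ = C₂ * (t ^ ((1 : ℝ) / 2) * t ^ (-((d : ℝ) + 1) / 2)) *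
                (t - s) ^ (-((d : ℝ) + 1) / 2) := by ring
            _ = C₂ * t ^ (-(d : ℝ) / 2) * (t - s) ^ (-((d : ℝ) + 1) / 2) := by rw [htt]
        have hE : Real.exp (-(β₁ * a ^ 2) / (t - s) + -(β₂ * b ^ 2) / s)
            ≤ Real.exp (-(β₁ * c ^ 2) / t + -(Cβ * a ^ 2) / (t - s)) := by
          rw [Real.exp_le_exp]
          have hk : 0 < β₁ - Cβ := by linarith
          have hw := wcauchy (a := a) (b := b) (p := (t - s) / (β₁ - Cβ)) (q := s / β₂)
            (by positivity) (by positivity)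
          rw [div_div_eq_mul_div, div_div_eq_mul_div] at hw
          have hpq0 : 0 < (t - s) / (β₁ - Cβ) + s / β₂ := by positivity
          have hpq : (t - s) / (β₁ - Cβ) + s / β₂ ≤ t / β₁ := by
            have h5 : (t - s) / (β₁ - Cβ) ≤ 2 * (t - s) / β₁ := by
              rw [div_le_div_iff₀ hk h₁]
              nlinarith [mul_nonneg hts.le (by linarith : (0 : ℝ) ≤ β₁ - 2 * Cβ)]
            have h6 : t - s ≤ (1 - θ) * t := by nlinarith
            have h7 : 2 * (t - s) / β₁ ≤ 2 * ((1 - θ) * t) / β₁ := by gcongr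
            have h8 : s / β₂ ≤ t / β₂ := by gcongr
            have h9 : 2 * ((1 - θ) * t) / β₁ + t / β₂ = t / β₁ := by
              rw [hθdef]; field_simp; ring
            linarith
          have hfrac : (a + b) ^ 2 * β₁ / t ≤ (a + b) ^ 2 / ((t - s) / (β₁ - Cβ) + s / β₂) := by
            rw [show (a + b) ^ 2 * β₁ / t = (a + b) ^ 2 / (t / β₁) from by
              rw [div_div_eq_mul_div]]
            gcongr
          have f1 : β₁ * c ^ 2 / t ≤ β₁ * (a + b) ^ 2 / t := by gcongr
          have g1 : a ^ 2 * (β₁ - Cβ) / (t - s) + b ^ 2 * β₂ / s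
              = β₁ * a ^ 2 / (t - s) - Cβ * a ^ 2 / (t - s) + β₂ * b ^ 2 / s := by ring
          have g2 : β₁ * (a + b) ^ 2 / t = (a + b) ^ 2 * β₁ / t := by ring
          rw [g1] at hw
          rw [g2] at f1
          rw [neg_div, neg_div, neg_div, neg_div]
          linarith [f1, hfrac, hw]
        apply mul_le_mul hP hE (Real.exp_pos _).le ?_
        have h : (0 : ℝ) ≤ t - s := hts.le
        positivity
      calc gker d β₁ (t - s) a * s ^ (-(1 : ℝ) / 2) * gker d β₂ s b
          ≤ C₂ * gker d β₁ t c *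
            ((t - s) ^ (-((d : ℝ) + 1) / 2) * Real.exp (-(Cβ * a ^ 2) / (t - s))) := key
        _ ≤ (C₁ + C₂) * gker d β₁ t c *
            (s ^ (-((d : ℝ) + 1) / 2) * Real.exp (-(Cβ * b ^ 2) / s) +
              (t - s) ^ (-((d : ℝ) + 1) / 2) * Real.exp (-(Cβ * a ^ 2) / (t - s))) := by
            apply mul_le_mul ?_ (le_add_of_nonneg_left hFb0) hFa0 (by positivity)
            exact mul_le_mul_of_nonneg_right (by linarith) hgk

end ThreePAux

set_option maxHeartbeats 2000000 in
/-- Gaussian 3P-type inequality. -/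
theorem gaussian_threeP (d : ℕ) (hd : 2 ≤ d) (β₁ β₂ : ℝ) (h₁ : 0 < β₁) (h₁₂ : β₁ < β₂) :
    ∃ Cg : ℝ, 0 < Cg ∧
      ∀ t : ℝ, 0 < t → ∀ x y z : Euc d,
        (∫ s in Set.Ioc (0 : ℝ) t,
            gker d β₁ (t - s) ‖x - z‖ * s ^ (-(1 : ℝ) / 2) * gker d β₂ s ‖z - y‖)
          ≤ Cg * (Nker d (min (β₂ - β₁) (β₁ / 2)) t ‖x - z‖ +
                Nker d (min (β₂ - β₁) (β₁ / 2)) t ‖z - y‖) * gker d β₁ t ‖x - y‖ := by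
  classical
  have hβ₂ : 0 < β₂ := h₁.trans h₁₂
  set θ : ℝ := (1 + β₁ / β₂) / 2 with hθdef
  have hrlt : β₁ / β₂ < 1 := (div_lt_one hβ₂).mpr h₁₂
  have hr0 : 0 < β₁ / β₂ := by positivity
  have hθ0 : 0 < θ := by rw [hθdef]; linarith
  have hθ1 : θ < 1 := by rw [hθdef]; linarith
  have h1θ : 0 < 1 - θ := by linarith
  refine ⟨(1 - θ) ^ (-(d : ℝ) / 2) + θ ^ (-((d : ℝ) + 1) / 2), by positivity, ?_⟩
  intro t ht x y z
  set Cβ := min (β₂ - β₁) (β₁ / 2) with hCβdef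
  have hCβ0 : 0 < Cβ := lt_min (by linarith) (by linarith)
  have hCβ1 : Cβ ≤ β₁ / 2 := min_le_right _ _
  have hCβ2 : Cβ ≤ β₂ - β₁ := min_le_left _ _
  set a := ‖x - z‖ with hadef
  set b := ‖z - y‖ with hbdef
  set c := ‖x - y‖ with hcdef
  have ha : 0 ≤ a := norm_nonneg _
  have hb : 0 ≤ b := norm_nonneg _
  have hc0 : 0 ≤ c := norm_nonneg _
  have hc : c ≤ a + b := by
    rw [hadef, hbdef, hcdef, show x - y = (x - z) + (z - y) from by abel]
    exact norm_add_le _ _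
  have hdR : (2 : ℝ) ≤ (d : ℝ) := by exact_mod_cast hd
  have hN : ∀ w : ℝ, 0 ≤ Nker d Cβ t w := by
    intro w
    unfold Nker
    apply MeasureTheory.setIntegral_nonneg measurableSet_Ioc
    intro u hu
    have h := hu.1
    positivity
  have hg : 0 ≤ gker d β₁ t c := gker_nonneg ht.le
  have hRHS0 : 0 ≤ ((1 - θ) ^ (-(d : ℝ) / 2) + θ ^ (-((d : ℝ) + 1) / 2)) *
      (Nker d Cβ t a + Nker d Cβ t b) * gker d β₁ t c :=
    mul_nonneg (mul_nonneg (by positivity) (add_nonneg (hN a) (hN b))) hg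
  have hsub : Set.Ioo (0 : ℝ) (t / 2) ⊆ Set.Ioc 0 t := fun u hu =>
    ⟨hu.1, by have := hu.2; linarith⟩
  by_cases hb0 : b = 0
  · -- `z = y`: the left-hand side integrand is not integrable, so the integral is 0
    have hnint : ¬ MeasureTheory.Integrable
        (fun s => gker d β₁ (t - s) a * s ^ (-(1 : ℝ) / 2) * gker d β₂ s b)
        (MeasureTheory.volume.restrict (Set.Ioc 0 t)) := by
      intro H
      have H2 : MeasureTheory.IntegrableOn
          (fun s => gker d β₁ (t - s) a * s ^ (-(1 : ℝ) / 2) * gker d β₂ s b)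
          (Set.Ioo 0 (t / 2)) := MeasureTheory.IntegrableOn.mono_set H hsub
      refine not_integrableOn_of_rpow_le
        (m := t ^ (-(d : ℝ) / 2) * Real.exp (-(β₁ * a ^ 2) / (t / 2)))
        (e := -((d : ℝ) + 1) / 2) (by positivity) (by linarith) (by linarith) ?_ H2
      intro s hs
      obtain ⟨hs0, hs2⟩ := hs
      have hts : 0 < t - s := by linarith
      have hsp : s ^ (-((d : ℝ) + 1) / 2) = s ^ (-(1 : ℝ) / 2) * s ^ (-(d : ℝ) / 2) := by
        rw [← Real.rpow_add hs0]; congr 1; ring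
      rw [hb0]
      simp only [gker]
      have hz : -(β₂ * (0 : ℝ) ^ 2) / s = 0 := by norm_num
      rw [hz, Real.exp_zero, hsp]
      have h1 : t ^ (-(d : ℝ) / 2) ≤ (t - s) ^ (-(d : ℝ) / 2) :=
        Real.rpow_le_rpow_of_nonpos hts (by linarith) (by linarith)
      have h2 : Real.exp (-(β₁ * a ^ 2) / (t / 2)) ≤ Real.exp (-(β₁ * a ^ 2) / (t - s)) := by
        rw [Real.exp_le_exp, neg_div, neg_div, neg_le_neg_iff]
        gcongr
        linarith
      calc t ^ (-(d : ℝ) / 2) * Real.exp (-(β₁ * a ^ 2) / (t / 2)) *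
            (s ^ (-(1 : ℝ) / 2) * s ^ (-(d : ℝ) / 2))
          ≤ (t - s) ^ (-(d : ℝ) / 2) * Real.exp (-(β₁ * a ^ 2) / (t - s)) *
            (s ^ (-(1 : ℝ) / 2) * s ^ (-(d : ℝ) / 2)) := by
            apply mul_le_mul_of_nonneg_right
              (mul_le_mul h1 h2 (Real.exp_pos _).le (Real.rpow_nonneg hts.le _))
            positivity
        _ = (t - s) ^ (-(d : ℝ) / 2) * Real.exp (-(β₁ * a ^ 2) / (t - s)) *
            s ^ (-(1 : ℝ) / 2) * (s ^ (-(d : ℝ) / 2) * 1) := by ring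
    rw [MeasureTheory.integral_undef hnint]
    exact hRHS0
  by_cases ha0 : a = 0
  · -- `x = z`: again the left-hand side integrand is not integrable
    have hnint : ¬ MeasureTheory.Integrable
        (fun s => gker d β₁ (t - s) a * s ^ (-(1 : ℝ) / 2) * gker d β₂ s b)
        (MeasureTheory.volume.restrict (Set.Ioc 0 t)) := by
      intro H
      have H2 := integrableOn_reflect ht.le
        (F := fun s => gker d β₁ (t - s) a * s ^ (-(1 : ℝ) / 2) * gker d β₂ s b) H
      have H3 : MeasureTheory.IntegrableOn
          (fun s => gker d β₁ (t - (t - s)) a * (t - s) ^ (-(1 : ℝ) / 2) * gker d β₂ (t - s) b)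
          (Set.Ioo 0 (t / 2)) := MeasureTheory.IntegrableOn.mono_set H2 hsub
      refine not_integrableOn_of_rpow_le
        (m := t ^ (-(1 : ℝ) / 2) * (t ^ (-(d : ℝ) / 2) * Real.exp (-(β₂ * b ^ 2) / (t / 2))))
        (e := -(d : ℝ) / 2) (by positivity) (by linarith) (by linarith) ?_ H3
      intro s hs
      obtain ⟨hs0, hs2⟩ := hs
      have hts : 0 < t - s := by linarith
      have hts2 : t / 2 ≤ t - s := by linarith
      have h1 : t - (t - s) = s := by ring
      rw [h1, ha0]
      simp only [gker]
      have hz : -(β₁ * (0 : ℝ) ^ 2) / s = 0 := by norm_num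
      rw [hz, Real.exp_zero, mul_one]
      have h1' : t ^ (-(1 : ℝ) / 2) ≤ (t - s) ^ (-(1 : ℝ) / 2) :=
        Real.rpow_le_rpow_of_nonpos hts (by linarith) (by norm_num)
      have h2' : t ^ (-(d : ℝ) / 2) ≤ (t - s) ^ (-(d : ℝ) / 2) :=
        Real.rpow_le_rpow_of_nonpos hts (by linarith) (by linarith)
      have h3' : Real.exp (-(β₂ * b ^ 2) / (t / 2)) ≤ Real.exp (-(β₂ * b ^ 2) / (t - s)) := by
        rw [Real.exp_le_exp, neg_div, neg_div, neg_le_neg_iff]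
        gcongr
      calc t ^ (-(1 : ℝ) / 2) * (t ^ (-(d : ℝ) / 2) * Real.exp (-(β₂ * b ^ 2) / (t / 2))) *
            s ^ (-(d : ℝ) / 2)
          ≤ (t - s) ^ (-(1 : ℝ) / 2) *
            ((t - s) ^ (-(d : ℝ) / 2) * Real.exp (-(β₂ * b ^ 2) / (t - s))) *
            s ^ (-(d : ℝ) / 2) := by
            apply mul_le_mul_of_nonneg_right ?_ (Real.rpow_nonneg hs0.le _)
            apply mul_le_mul h1'
              (mul_le_mul h2' h3' (Real.exp_pos _).le (Real.rpow_nonneg hts.le _))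
              (by positivity) (Real.rpow_nonneg hts.le _)
        _ = s ^ (-(d : ℝ) / 2) * (t - s) ^ (-(1 : ℝ) / 2) *
            ((t - s) ^ (-(d : ℝ) / 2) * Real.exp (-(β₂ * b ^ 2) / (t - s))) := by ring
    rw [MeasureTheory.integral_undef hnint]
    exact hRHS0
  · -- main case : both `a ≠ 0` and `b ≠ 0`
    have hd1 : 1 ≤ d := by omega
    have hFb : MeasureTheory.IntegrableOn
        (fun u : ℝ => u ^ (-((d : ℝ) + 1) / 2) * Real.exp (-(Cβ * b ^ 2) / u))
        (Set.Ioc 0 t) := F_integrableOn d hd1 hCβ0 hb0 ht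
    have hFa : MeasureTheory.IntegrableOn
        (fun u : ℝ => u ^ (-((d : ℝ) + 1) / 2) * Real.exp (-(Cβ * a ^ 2) / u))
        (Set.Ioc 0 t) := F_integrableOn d hd1 hCβ0 ha0 ht
    have hFar : MeasureTheory.IntegrableOn
        (fun s : ℝ => (t - s) ^ (-((d : ℝ) + 1) / 2) * Real.exp (-(Cβ * a ^ 2) / (t - s)))
        (Set.Ioc 0 t) := integrableOn_reflect
          (F := fun u : ℝ => u ^ (-((d : ℝ) + 1) / 2) * Real.exp (-(Cβ * a ^ 2) / u)) ht.le hFa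
    have hdom : MeasureTheory.IntegrableOn
        (fun s : ℝ => ((1 - θ) ^ (-(d : ℝ) / 2) + θ ^ (-((d : ℝ) + 1) / 2)) * gker d β₁ t c *
          (s ^ (-((d : ℝ) + 1) / 2) * Real.exp (-(Cβ * b ^ 2) / s) +
            (t - s) ^ (-((d : ℝ) + 1) / 2) * Real.exp (-(Cβ * a ^ 2) / (t - s))))
        (Set.Ioc 0 t) := (hFb.add hFar).const_mul _
    have hmono := MeasureTheory.integral_mono_of_nonneg
      (f := fun s => gker d β₁ (t - s) a * s ^ (-(1 : ℝ) / 2) * gker d β₂ s b)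
      (g := fun s : ℝ => ((1 - θ) ^ (-(d : ℝ) / 2) + θ ^ (-((d : ℝ) + 1) / 2)) *
        gker d β₁ t c *
        (s ^ (-((d : ℝ) + 1) / 2) * Real.exp (-(Cβ * b ^ 2) / s) +
          (t - s) ^ (-((d : ℝ) + 1) / 2) * Real.exp (-(Cβ * a ^ 2) / (t - s))))
      (μ := MeasureTheory.volume.restrict (Set.Ioc 0 t))
      ?_ hdom ?_
    · refine le_trans hmono ?_
      rw [MeasureTheory.integral_const_mul _ _,
        MeasureTheory.integral_add hFb hFar]
      have hrefl : (∫ s in Set.Ioc (0 : ℝ) t,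
            (t - s) ^ (-((d : ℝ) + 1) / 2) * Real.exp (-(Cβ * a ^ 2) / (t - s)))
          = ∫ u in Set.Ioc (0 : ℝ) t,
            u ^ (-((d : ℝ) + 1) / 2) * Real.exp (-(Cβ * a ^ 2) / u) :=
        integral_reflect (fun u => u ^ (-((d : ℝ) + 1) / 2) *
          Real.exp (-(Cβ * a ^ 2) / u)) ht.le
      rw [hrefl]
      have hNb : Nker d Cβ t b
          = ∫ u in Set.Ioc (0 : ℝ) t, u ^ (-((d : ℝ) + 1) / 2) *
            Real.exp (-(Cβ * b ^ 2) / u) := rfl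
      have hNa : Nker d Cβ t a
          = ∫ u in Set.Ioc (0 : ℝ) t, u ^ (-((d : ℝ) + 1) / 2) *
            Real.exp (-(Cβ * a ^ 2) / u) := rfl
      rw [← hNb, ← hNa]
      exact le_of_eq (by ring)
    · rw [Filter.EventuallyLE, MeasureTheory.ae_restrict_iff' measurableSet_Ioc]
      filter_upwards with s hs
      have h0s : 0 < s := hs.1
      have h0ts : 0 ≤ t - s := by linarith [hs.2]
      simp only [Pi.zero_apply]
      have hg1 : 0 ≤ gker (d : ℝ) β₁ (t - s) a := gker_nonneg h0ts
      have hg2 : 0 ≤ gker (d : ℝ) β₂ s b := gker_nonneg h0s.le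
      have hg3 : 0 ≤ s ^ (-(1 : ℝ) / 2) := Real.rpow_nonneg h0s.le _
      positivity
    · rw [Filter.EventuallyLE, MeasureTheory.ae_restrict_iff' measurableSet_Ioc]
      filter_upwards with s hs
      exact pointwise_bound d hd1 h₁ h₁₂ hθdef hCβ1 hCβ2 hCβ0 ht hs.1 hs.2 ha hb hc0 hc
end
end
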